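/- Let U ∈ ℝ³ be a constant vector and let B : ℝ × ℝ³ → ℝ³ be twice continuously differentiable. Suppose B satisfies the magnetic induction equation ∂_t B_i(t,x) = − Σ_{j=1}^{3} ∂_{x_j}(B_i U_j − U_i B_j)(t,x) for all i ∈ {1,2,3} and all (t,x). If the spatial divergence of B vanishes at time 0, i.e. Σ_{i=1}^{3} ∂_{x_i} B_i(0,x) = 0 for all x ∈ ℝ³, then Σ_{i=1}^{3} ∂_{x_i} B_i(t,x) = 0 for all t ∈ ℝ and all x ∈ ℝ³. -/

import Mathlib

open MeasureTheory MvPolynomial Real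

noncomputable section

/-- Vertices of the reference tetrahedron: v0=(0,0,0), v1=(1,0,0), v2=(0,1,0), v3=(0,0,1). -/
def vtx : Fin 4 → Fin 3 → ℝ :=
  ![![0,0,0], ![1,0,0], ![0,1,0], ![0,0,1]]

/-- Barycentric coordinates λ₀ = 1-x-y-z, λ₁ = x, λ₂ = y, λ₃ = z. -/
def lam : Fin 4 → (Fin 3 → ℝ) → ℝ :=
  ![fun x => 1 - x 0 - x 1 - x 2, fun x => x 0, fun x => x 1, fun x => x 2]

/-- The reference tetrahedron K = {x : λ_j(x) ≥ 0 for all j}. -/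
def Ktet : Set (Fin 3 → ℝ) := {x | ∀ j : Fin 4, 0 ≤ lam j x}

/-- Face F_j = {x ∈ K : λ_j(x) = 0}. -/
def faceK (j : Fin 4) : Set (Fin 3 → ℝ) := {x ∈ Ktet | lam j x = 0}

/-- Outward unit normals of the four faces of K. -/
def normalK : Fin 4 → Fin 3 → ℝ :=
  ![fun _ => 1 / Real.sqrt 3, ![-1,0,0], ![0,-1,0], ![0,0,-1]]

/-- (Constant) gradients of the barycentric coordinates. -/
def gradLam : Fin 4 → Fin 3 → ℝ :=
  ![![-1,-1,-1], ![1,0,0], ![0,1,0], ![0,0,1]]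

/-- Divergence of a vector polynomial. -/
def divP (Φ : Fin 3 → MvPolynomial (Fin 3) ℝ) : MvPolynomial (Fin 3) ℝ :=
  ∑ i, MvPolynomial.pderiv i (Φ i)

/-- The normal component of the vector polynomial Φ vanishes on every face of K. -/
def normalVanish (Φ : Fin 3 → MvPolynomial (Fin 3) ℝ) : Prop :=
  ∀ j : Fin 4, ∀ q ∈ faceK j, ∑ i, MvPolynomial.eval q (Φ i) * normalK j i = 0

/-- Divergence of a vector field (as a function). -/
def divF (Φ : (Fin 3 → ℝ) → (Fin 3 → ℝ)) (x : Fin 3 → ℝ) : ℝ :=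
  ∑ i, fderiv ℝ Φ x (Pi.single i 1) i

/-- The normal component of the vector field Φ vanishes on every face of K. -/
def normalVanishF (Φ : (Fin 3 → ℝ) → (Fin 3 → ℝ)) : Prop :=
  ∀ j : Fin 4, ∀ q ∈ faceK j, ∑ i, Φ q i * normalK j i = 0


/-- a C² solution of the magnetic induction equation
B_t = -div(B Uᵀ - U Bᵀ) which is divergence-free at time 0 is divergence-free
for all time. -/
private lemma timeSlice {f : ℝ × (Fin 3 → ℝ) → ℝ} {t : ℝ} {x : Fin 3 → ℝ}
    (hf : DifferentiableAt ℝ f (t, x)) :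
    HasDerivAt (fun s => f (s, x)) (fderiv ℝ f (t, x) (1, 0)) t := by
  have h1 : HasDerivAt (fun s : ℝ => (s, x)) ((1 : ℝ), (0 : Fin 3 → ℝ)) t :=
    (hasDerivAt_id t).prodMk (hasDerivAt_const t x)
  exact hf.hasFDerivAt.comp_hasDerivAt t h1

private lemma spaceSlice {f : ℝ × (Fin 3 → ℝ) → ℝ} {t : ℝ} {x : Fin 3 → ℝ}
    (hf : DifferentiableAt ℝ f (t, x)) :
    HasFDerivAt (fun y => f (t, y))
      ((fderiv ℝ f (t, x)).comp (ContinuousLinearMap.inr ℝ ℝ (Fin 3 → ℝ))) x := by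
  have h1 : HasFDerivAt (fun y : Fin 3 → ℝ => (t, y))
      (ContinuousLinearMap.inr ℝ ℝ (Fin 3 → ℝ)) x :=
    (hasFDerivAt_const t x).prodMk (hasFDerivAt_id x)
  exact hf.hasFDerivAt.comp x h1

private lemma spaceSlice' {f : ℝ × (Fin 3 → ℝ) → ℝ} {t : ℝ} {x : Fin 3 → ℝ}
    (hf : DifferentiableAt ℝ f (t, x)) (v : Fin 3 → ℝ) :
    fderiv ℝ (fun y => f (t, y)) x v = fderiv ℝ f (t, x) (0, v) := by
  rw [(spaceSlice hf).fderiv]; rfl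

private lemma sndDeriv {f : ℝ × (Fin 3 → ℝ) → ℝ} (hf : ContDiff ℝ 2 f)
    (p w : ℝ × (Fin 3 → ℝ)) :
    HasFDerivAt (fun q => fderiv ℝ f q w)
      ((ContinuousLinearMap.apply ℝ ℝ w).comp (fderiv ℝ (fderiv ℝ f) p)) p := by
  have h1 : DifferentiableAt ℝ (fderiv ℝ f) p := by
    have h2 : ContDiff ℝ 1 (fderiv ℝ f) := hf.fderiv_right (m := 1) le_rfl
    exact (h2.differentiable one_ne_zero).differentiableAt
  exact (ContinuousLinearMap.apply ℝ ℝ w).hasFDerivAt.comp p h1.hasFDerivAt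

theorem induction_equation_preserves_div_free
    (U : Fin 3 → ℝ) (B : ℝ × (Fin 3 → ℝ) → (Fin 3 → ℝ)) (hB : ContDiff ℝ 2 B)
    (heq : ∀ (t : ℝ) (x : Fin 3 → ℝ) (i : Fin 3),
      deriv (fun s => B (s, x) i) t =
        - ∑ j, fderiv ℝ (fun y => B (t, y) i * U j - U i * B (t, y) j) x (Pi.single j 1))
    (h0 : ∀ x : Fin 3 → ℝ,
      ∑ i, fderiv ℝ (fun y => B (0, y) i) x (Pi.single i 1) = 0) :
    ∀ (t : ℝ) (x : Fin 3 → ℝ),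
      ∑ i, fderiv ℝ (fun y => B (t, y) i) x (Pi.single i 1) = 0 := by
  have hF : ∀ i : Fin 3, ContDiff ℝ 2 (fun p : ℝ × (Fin 3 → ℝ) => B p i) := fun i =>
    (ContinuousLinearMap.proj (R := ℝ) (φ := fun _ : Fin 3 => ℝ) i).contDiff.comp hB
  set F : Fin 3 → (ℝ × (Fin 3 → ℝ)) → ℝ := fun i p => B p i with hFdef
  have hFd : ∀ i, Differentiable ℝ (F i) := fun i => (hF i).differentiable (by norm_num)
  have hsymm : ∀ (i : Fin 3) (p v w : ℝ × (Fin 3 → ℝ)),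
      fderiv ℝ (fderiv ℝ (F i)) p v w = fderiv ℝ (fderiv ℝ (F i)) p w v :=
    fun i p => (hF i).contDiffAt.isSymmSndFDerivAt (by norm_num)
  set D : (ℝ × (Fin 3 → ℝ)) → ℝ :=
    fun p => ∑ i, fderiv ℝ (F i) p ((0 : ℝ), Pi.single i 1) with hDdef
  -- slice identity
  have hslice : ∀ (t : ℝ) (x : Fin 3 → ℝ) (i : Fin 3) (v : Fin 3 → ℝ),
      fderiv ℝ (fun y => B (t, y) i) x v = fderiv ℝ (F i) (t, x) (0, v) :=
    fun t x i v => spaceSlice' ((hFd i) (t, x)) v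
  -- pointwise PDE for components
  have hPDE : ∀ (p : ℝ × (Fin 3 → ℝ)) (i : Fin 3),
      fderiv ℝ (F i) p (1, 0) =
        - ∑ j, (U j * fderiv ℝ (F i) p ((0 : ℝ), Pi.single j 1)
                - U i * fderiv ℝ (F j) p ((0 : ℝ), Pi.single j 1)) := by
    rintro ⟨t, x⟩ i
    have hL : deriv (fun s => B (s, x) i) t = fderiv ℝ (F i) (t, x) (1, 0) :=
      (timeSlice ((hFd i) (t, x))).deriv
    rw [← hL, heq t x i]
    congr 1
    refine Finset.sum_congr rfl fun j _ => ?_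
    have h1 : HasFDerivAt (fun y => B (t, y) i * U j - U i * B (t, y) j)
        ((U j • ((fderiv ℝ (F i) (t, x)).comp (ContinuousLinearMap.inr ℝ ℝ (Fin 3 → ℝ)))) -
         (U i • ((fderiv ℝ (F j) (t, x)).comp (ContinuousLinearMap.inr ℝ ℝ (Fin 3 → ℝ))))) x :=
      ((spaceSlice ((hFd i) (t, x))).mul_const (U j)).sub
        ((spaceSlice ((hFd j) (t, x))).const_mul (U i))
    rw [h1.fderiv]
    simp [ContinuousLinearMap.smul_apply, smul_eq_mul]
  -- D has a total derivative
  have hDf : ∀ p : ℝ × (Fin 3 → ℝ), HasFDerivAt D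
      (∑ i, (ContinuousLinearMap.apply ℝ ℝ ((0 : ℝ), (Pi.single i 1 : Fin 3 → ℝ))).comp
        (fderiv ℝ (fderiv ℝ (F i)) p)) p :=
    fun p => HasFDerivAt.fun_sum fun i _ => sndDeriv (hF i) p ((0 : ℝ), Pi.single i 1)
  -- time derivative of D vanishes
  have hkey : ∀ p : ℝ × (Fin 3 → ℝ), fderiv ℝ D p (1, 0) = 0 := by
    intro p
    rw [(hDf p).fderiv]
    simp only [ContinuousLinearMap.sum_apply, ContinuousLinearMap.comp_apply,
      ContinuousLinearMap.apply_apply]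
    have step1 : ∀ i : Fin 3,
        fderiv ℝ (fderiv ℝ (F i)) p (1, 0) ((0 : ℝ), Pi.single i 1)
          = - ∑ j, (U j * fderiv ℝ (fderiv ℝ (F i)) p ((0 : ℝ), Pi.single i 1) ((0 : ℝ), Pi.single j 1)
                    - U i * fderiv ℝ (fderiv ℝ (F j)) p ((0 : ℝ), Pi.single i 1) ((0 : ℝ), Pi.single j 1)) := by
      intro i
      rw [hsymm i p]
      have e1 : fderiv ℝ (fun q => fderiv ℝ (F i) q ((1 : ℝ), 0)) p ((0 : ℝ), Pi.single i 1)
          = fderiv ℝ (fderiv ℝ (F i)) p ((0 : ℝ), Pi.single i 1) ((1 : ℝ), 0) := by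
        rw [(sndDeriv (hF i) p ((1 : ℝ), (0 : Fin 3 → ℝ))).fderiv]; rfl
      rw [← e1]
      have hfun : (fun q => fderiv ℝ (F i) q ((1 : ℝ), 0))
          = fun q => - ∑ j, (U j * fderiv ℝ (F i) q ((0 : ℝ), Pi.single j 1)
              - U i * fderiv ℝ (F j) q ((0 : ℝ), Pi.single j 1)) :=
        funext fun q => hPDE q i
      rw [hfun]
      have h3 : HasFDerivAt (fun q => - ∑ j, (U j * fderiv ℝ (F i) q ((0 : ℝ), Pi.single j 1)
              - U i * fderiv ℝ (F j) q ((0 : ℝ), Pi.single j 1)))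
          (- ∑ j, (U j • ((ContinuousLinearMap.apply ℝ ℝ ((0 : ℝ), (Pi.single j 1 : Fin 3 → ℝ))).comp
                (fderiv ℝ (fderiv ℝ (F i)) p))
              - U i • ((ContinuousLinearMap.apply ℝ ℝ ((0 : ℝ), (Pi.single j 1 : Fin 3 → ℝ))).comp
                (fderiv ℝ (fderiv ℝ (F j)) p)))) p :=
        (HasFDerivAt.fun_sum fun j _ =>
          ((sndDeriv (hF i) p ((0 : ℝ), Pi.single j 1)).const_mul (U j)).sub
            ((sndDeriv (hF j) p ((0 : ℝ), Pi.single j 1)).const_mul (U i))).neg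
      rw [h3.fderiv]
      simp [ContinuousLinearMap.smul_apply, smul_eq_mul]
    rw [Finset.sum_congr rfl fun i _ => step1 i]
    have hswap : ∑ i, ∑ j : Fin 3,
          U i * fderiv ℝ (fderiv ℝ (F j)) p ((0 : ℝ), Pi.single i 1) ((0 : ℝ), Pi.single j 1)
        = ∑ i, ∑ j : Fin 3,
          U j * fderiv ℝ (fderiv ℝ (F i)) p ((0 : ℝ), Pi.single i 1) ((0 : ℝ), Pi.single j 1) := by
      rw [Finset.sum_comm]
      exact Finset.sum_congr rfl fun i _ => Finset.sum_congr rfl fun j _ => by rw [hsymm]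
    simp only [neg_sub, Finset.sum_sub_distrib]
    rw [hswap, sub_self]
  -- conclude
  have hDdiff : ∀ p : ℝ × (Fin 3 → ℝ), DifferentiableAt ℝ D p := fun p => (hDf p).differentiableAt
  have hconst : ∀ (x : Fin 3 → ℝ) (t : ℝ), D (t, x) = D (0, x) := by
    intro x t
    have hdiff : Differentiable ℝ (fun s => D (s, x)) :=
      fun s => (timeSlice (hDdiff (s, x))).differentiableAt
    have hz : ∀ s, deriv (fun s => D (s, x)) s = 0 := fun s => by
      rw [(timeSlice (hDdiff (s, x))).deriv]; exact hkey (s, x)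
    exact is_const_of_deriv_eq_zero hdiff hz t 0
  intro t x
  have h1 : ∑ i, fderiv ℝ (fun y => B (t, y) i) x (Pi.single i 1) = D (t, x) :=
    Finset.sum_congr rfl fun i _ => hslice t x i _
  have h2 : D (0, x) = ∑ i, fderiv ℝ (fun y => B (0, y) i) x (Pi.single i 1) :=
    Finset.sum_congr rfl fun i _ => (hslice 0 x i _).symm
  rw [h1, hconst x t, h2]
  exact h0 x
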